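/- arXiv:1804.05041 — 4 statements merged into one kernel-verified Lean document; each statement's English description precedes it below -/
import Mathlib

section
/- Let k ≥ s ≥ 2 and let g : Fin (k+1) → Fin (s+1) be a surjection. If T is a computable s-branching subtree of (s+1)^{<ω}, then the set U = {σ ∈ (k+1)^{<ω} : the coordinatewise image of σ under g belongs to T} is a computable k-tree contained in (k+1)^{<ω}. Consequently, if f : ℕ → Fin (k+1) is not a path through any computable k-tree contained in (k+1)^{<ω}, then g ∘ f is not a path through any computable s-branching subtree of (s+1)^{<ω}. -/
/-! Basic notions: subtrees of `X^{<ω}`, `k`-branching trees, `k`-trees, paths,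
computable trees, relative computability (oracle machines), surviving functions,
and computable traceability. -/

/-- A subtree of `X^{<ω}`: a set of finite strings closed under initial segments. -/
def IsSubtree {X : Type*} (T : Set (List X)) : Prop :=
  ∀ σ ∈ T, ∀ τ : List X, τ <+: σ → τ ∈ T

/-- The set of immediate successors of the node `σ` in the tree `T`. -/
def succSet {X : Type*} (T : Set (List X)) (σ : List X) : Set X :=
  {x | σ ++ [x] ∈ T}

/-- A `k`-branching tree: a subtree in which every node has either exactly `1`
or exactly `k` immediate successors. -/
def IsBranchingTree {X : Type*} (k : ℕ) (T : Set (List X)) : Prop :=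
  IsSubtree T ∧ ∀ σ ∈ T, (succSet T σ).ncard = 1 ∨ (succSet T σ).ncard = k

/-- A `k`-tree: a subtree in which every node has at least `1` and at most `k`
immediate successors. -/
def IsKTree {X : Type*} (k : ℕ) (T : Set (List X)) : Prop :=
  IsSubtree T ∧ ∀ σ ∈ T, 1 ≤ (succSet T σ).ncard ∧ (succSet T σ).ncard ≤ k

/-- `f` is a path through `T`: every finite initial segment of `f` belongs to `T`. -/
def IsPathThrough {X : Type*} (f : ℕ → X) (T : Set (List X)) : Prop :=
  ∀ n : ℕ, (List.range n).map f ∈ T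

/-- A tree is computable when membership is decidable by an algorithm. -/
def ComputableTree {X : Type*} [Primcodable X] (T : Set (List X)) : Prop :=
  ComputablePred (· ∈ T)

/-- Partial functions `ℕ →. ℕ` which are partial recursive relative to the oracle `O`
(the relativization of `Nat.Partrec`). -/
inductive RecursiveInOracle (O : ℕ → ℕ) : (ℕ →. ℕ) → Prop
  | oracle : RecursiveInOracle O (fun n => Part.some (O n))
  | zero : RecursiveInOracle O (pure 0)
  | succ : RecursiveInOracle O ↑Nat.succ
  | left : RecursiveInOracle O ↑fun n : ℕ => n.unpair.1
  | right : RecursiveInOracle O ↑fun n : ℕ => n.unpair.2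
  | pair {f g} : RecursiveInOracle O f → RecursiveInOracle O g →
      RecursiveInOracle O fun n => Nat.pair <$> f n <*> g n
  | comp {f g} : RecursiveInOracle O f → RecursiveInOracle O g →
      RecursiveInOracle O fun n => g n >>= f
  | prec {f g} : RecursiveInOracle O f → RecursiveInOracle O g →
      RecursiveInOracle O (Nat.unpaired fun a n =>
        n.rec (f a) fun y IH => do let i ← IH; g (Nat.pair a (Nat.pair y i)))
  | rfind {f} : RecursiveInOracle O f →
      RecursiveInOracle O fun a => Nat.rfind fun n => (fun m => m = 0) <$> f (Nat.pair a n)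

/-- A total function between `Primcodable` types is computable relative to the oracle `O`. -/
def ComputableInOracle (O : ℕ → ℕ) {α σ : Type*} [Primcodable α] [Primcodable σ] (f : α → σ) : Prop :=
  RecursiveInOracle O fun n =>
    Part.bind ((Encodable.decode (α := α) n) : Part α) fun a =>
      Part.some (Encodable.encode (f a))

/-- For `k ≥ 2`, `f : ℕ → Fin (k+1)` is `k`-surviving if it is not a path through any
computable `k`-branching subtree of `(k+1)^{<ω}`. -/
def KSurviving (k : ℕ) (f : ℕ → Fin (k + 1)) : Prop :=
  ∀ T : Set (List (Fin (k + 1))),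
    IsBranchingTree k T → ComputableTree T → ¬ IsPathThrough f T

/-- The degree of the oracle `O` is computably traceable: there is a computable bound `h`
such that every total `f : ℕ → ℕ` computable in `O` admits a computable trace. -/
def ComputablyTraceableDeg (O : ℕ → ℕ) : Prop :=
  ∃ h : ℕ → ℕ, Computable h ∧
    ∀ f : ℕ → ℕ, ComputableInOracle O f →
      ∃ S : ℕ → Finset ℕ,
        (∃ L : ℕ → List ℕ, Computable L ∧ ∀ n, (L n).toFinset = S n) ∧
        ∀ n, (S n).card ≤ h n ∧ f n ∈ S n

/-- pulling back a computable `s`-branching tree along a surjection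
`g : Fin (k+1) → Fin (s+1)` yields a computable `k`-tree; consequently a function
surviving all computable `k`-trees pushes forward to a function surviving all
computable `s`-branching trees. -/
theorem preimage_tree_and_pushforward_surviving (k s : ℕ) (hs : 2 ≤ s) (hsk : s ≤ k)
    (g : Fin (k + 1) → Fin (s + 1)) (hg : Function.Surjective g) :
    (∀ T : Set (List (Fin (s + 1))), IsBranchingTree s T → ComputableTree T →
      IsKTree k {σ : List (Fin (k + 1)) | σ.map g ∈ T} ∧
        ComputableTree {σ : List (Fin (k + 1)) | σ.map g ∈ T}) ∧
    (∀ f : ℕ → Fin (k + 1),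
      (∀ U : Set (List (Fin (k + 1))), IsKTree k U → ComputableTree U →
        ¬ IsPathThrough f U) →
      ∀ T : Set (List (Fin (s + 1))), IsBranchingTree s T → ComputableTree T →
        ¬ IsPathThrough (fun n => g (f n)) T) := by
  have main : ∀ T : Set (List (Fin (s + 1))), IsBranchingTree s T → ComputableTree T →
      IsKTree k {σ : List (Fin (k + 1)) | σ.map g ∈ T} ∧
        ComputableTree {σ : List (Fin (k + 1)) | σ.map g ∈ T} := by
    intro T hT hTc
    obtain ⟨hsub, hbr⟩ := hT
    have hsucc : ∀ σ : List (Fin (k + 1)),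
        succSet {σ : List (Fin (k + 1)) | σ.map g ∈ T} σ = g ⁻¹' succSet T (σ.map g) := by
      intro σ
      ext x
      simp [succSet, Set.mem_preimage]
    constructor
    · constructor
      · intro σ hσ τ hτ
        exact hsub _ hσ _ (hτ.map g)
      · intro σ hσ
        have hστ : σ.map g ∈ T := hσ
        have hb := hbr _ hστ
        -- the successor set of `σ.map g` in `T` is nonempty and not all of `Fin (s+1)`
        have hne : (succSet T (σ.map g)).Nonempty := by
          apply Set.nonempty_of_ncard_ne_zero
          rcases hb with h | h <;> omega
        have hnu : succSet T (σ.map g) ≠ Set.univ := by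
          intro h
          have : (succSet T (σ.map g)).ncard = s + 1 := by
            rw [h, Set.ncard_univ, Nat.card_eq_fintype_card, Fintype.card_fin]
          rcases hb with h' | h' <;> omega
        rw [hsucc]
        constructor
        · obtain ⟨y, hy⟩ := hne
          obtain ⟨x, hx⟩ := hg y
          have : x ∈ g ⁻¹' succSet T (σ.map g) := by simp [Set.mem_preimage, hx, hy]
          have hpos : 0 < (g ⁻¹' succSet T (σ.map g)).ncard :=
            (Set.ncard_pos (Set.toFinite _)).mpr ⟨x, this⟩
          omega
        · obtain ⟨y, hy⟩ := (Set.ne_univ_iff_exists_notMem _).mp hnu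
          obtain ⟨x, hx⟩ := hg y
          have hss : g ⁻¹' succSet T (σ.map g) ⊂ Set.univ := by
            refine (Set.ssubset_univ_iff).mpr ?_
            intro h
            exact hy (by rw [← hx]; exact (h ▸ Set.mem_univ x : x ∈ g ⁻¹' _))
          have := Set.ncard_lt_ncard hss (Set.toFinite _)
          rw [Set.ncard_univ, Nat.card_eq_fintype_card, Fintype.card_fin] at this
          omega
    · -- computability
      obtain ⟨fT, hfT, hpT⟩ := ComputablePred.computable_iff.mp hTc
      apply ComputablePred.computable_iff.mpr
      refine ⟨fun σ => fT (σ.map g), ?_, ?_⟩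
      · have hmap : Computable (fun σ : List (Fin (k + 1)) => σ.map g) :=
          (Primrec.list_map Primrec.id ((Primrec.dom_finite g).comp₂ Primrec₂.right)).to_comp
        exact hfT.comp hmap
      · funext σ
        simp only [Set.mem_setOf_eq, hpT]
  refine ⟨main, ?_⟩
  intro f hf T hT hTc hpath
  obtain ⟨hU, hUc⟩ := main T hT hTc
  apply hf _ hU hUc
  intro n
  have := hpath n
  simpa [Set.mem_setOf_eq, List.map_map, Function.comp_def] using this
end

section
/- Let 2 ≤ k ≤ n. Every nonempty computable k-tree T contained in n^{<ω} (strings over Fin n) is contained in some computable k-branching subtree of n^{<ω}. Consequently, for f : ℕ → Fin n, f is a path through some computable k-tree contained in n^{<ω} if and only if f is a path through some computable k-branching subtree of n^{<ω}. -/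
/-! ### Auxiliary machinery for extending a `k`-tree to a `k`-branching tree -/

theorem computable_list_foldl' {α β σ : Type*} [Primcodable α] [Primcodable β] [Primcodable σ]
    [Inhabited β] {l : α → List β} {g : α → σ} {h : α → σ × β → σ}
    (hl : Computable l) (hg : Computable g) (hh : Computable₂ h) :
    Computable fun a => (l a).foldl (fun s b => h a (s, b)) (g a) := by
  have step : Computable₂ fun a (p : ℕ × σ) =>
      h a (p.2, ((l a)[p.1]?).getD default) :=
    hh.comp Computable.fst
      (Computable.pair (Computable.snd.comp Computable.snd)
        (Computable.option_getD
          (Computable.list_getElem?.comp (hl.comp Computable.fst)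
            (Computable.fst.comp Computable.snd))
          (Computable.const default)))
  have := Computable.nat_rec (Computable.list_length.comp hl) hg step
  refine this.of_eq fun a => ?_
  have key : ∀ m : ℕ, m ≤ (l a).length →
      (Nat.rec (motive := fun _ => σ) (g a)
        (fun y IH => h a (IH, ((l a)[y]?).getD default)) m)
        = ((l a).take m).foldl (fun s b => h a (s, b)) (g a) := by
    intro m hm
    induction m with
    | zero => simp
    | succ m ih =>
      have hmlt : m < (l a).length := lt_of_lt_of_le (Nat.lt_succ_self m) hm
      rw [List.take_succ]
      obtain ⟨x, hx⟩ : ∃ x, (l a)[m]? = some x := by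
        rw [List.getElem?_eq_getElem hmlt]; exact ⟨_, rfl⟩
      have hx' : (l a)[m]? = some x := by simpa using hx
      simp [ih (le_of_lt hmlt), hx', List.foldl_append]
  have := key (l a).length le_rfl
  simpa using this

theorem card_rank_filter' {α : Type*} [LinearOrder α] [DecidableEq α] (N : Finset α) (m : ℕ)
    (hm : m ≤ N.card) :
    (N.filter (fun x => (N.filter (· < x)).card < m)).card = m := by
  set r : α → ℕ := fun x => (N.filter (· < x)).card with hr
  have hmono : ∀ x ∈ N, ∀ y ∈ N, x < y → r x < r y := by
    intro x hx y hy hxy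
    apply Finset.card_lt_card
    constructor
    · intro z hz
      rw [Finset.mem_filter] at hz ⊢
      exact ⟨hz.1, lt_trans hz.2 hxy⟩
    · intro hsub
      have hxmem : x ∈ N.filter (· < y) := Finset.mem_filter.2 ⟨hx, hxy⟩
      have := hsub hxmem
      rw [Finset.mem_filter] at this
      exact lt_irrefl x this.2
  have hinj : Set.InjOn r ↑N := by
    intro x hx y hy hxy
    rcases lt_trichotomy x y with h | h | h
    · exact absurd hxy (ne_of_lt (hmono x hx y hy h))
    · exact h
    · exact absurd hxy.symm (ne_of_lt (hmono y hy x hx h))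
  have hlt : ∀ x ∈ N, r x < N.card := by
    intro x hx
    apply Finset.card_lt_card
    constructor
    · exact Finset.filter_subset _ _
    · intro hsub
      have := hsub hx
      rw [Finset.mem_filter] at this
      exact lt_irrefl x this.2
  have himage : N.image r = Finset.range N.card := by
    apply Finset.eq_of_subset_of_card_le
    · intro z hz
      rw [Finset.mem_image] at hz
      obtain ⟨x, hx, rfl⟩ := hz
      exact Finset.mem_range.2 (hlt x hx)
    · rw [Finset.card_range, Finset.card_image_of_injOn hinj]
  have hinj' : Set.InjOn r ↑(N.filter (fun x => r x < m)) :=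
    hinj.mono (by exact_mod_cast Finset.filter_subset _ _)
  calc (N.filter (fun x => r x < m)).card
      = ((N.filter (fun x => r x < m)).image r).card :=
        (Finset.card_image_of_injOn hinj').symm
    _ = ((N.image r).filter (· < m)).card := by rw [Finset.filter_image]
    _ = ((Finset.range N.card).filter (· < m)).card := by rw [himage]
    _ = m := by
        have : (Finset.range N.card).filter (· < m) = Finset.range m := by
          ext z
          simp only [Finset.mem_filter, Finset.mem_range]
          omega
        rw [this, Finset.card_range]

/-- Boolean test: `x` is an allowed child of `τ` in the extended tree. -/
def memB (k : ℕ) {n : ℕ} (f : List (Fin n) → Bool) (τ : List (Fin n)) (x : Fin n) : Bool :=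
  if f τ then
    f (τ ++ [x]) ||
      decide ((((List.finRange n).filter fun (y : Fin n) =>
          decide ((y : ℕ) < (x : ℕ)) && !f (τ ++ [y])).length
        + ((List.finRange n).filter fun (y : Fin n) => f (τ ++ [y])).length) < k)
  else decide ((x : ℕ) < k)

def chkRun (k : ℕ) {n : ℕ} (f : List (Fin n) → Bool) (σ : List (Fin n)) :
    List (Fin n) × Bool :=
  σ.foldl (fun p x => (p.1 ++ [x], p.2 && memB k f p.1 x)) ([], true)

def chk (k : ℕ) {n : ℕ} (f : List (Fin n) → Bool) (σ : List (Fin n)) : Bool :=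
  (chkRun k f σ).2

lemma chkRun_fst (k : ℕ) {n : ℕ} (f : List (Fin n) → Bool) (σ : List (Fin n)) :
    (chkRun k f σ).1 = σ := by
  induction σ using List.reverseRecOn with
  | nil => rfl
  | append_singleton σ x ih => simp [chkRun, List.foldl_append] at ih ⊢; simp [ih]

lemma chk_append (k : ℕ) {n : ℕ} (f : List (Fin n) → Bool) (σ : List (Fin n)) (x : Fin n) :
    chk k f (σ ++ [x]) = (chk k f σ && memB k f σ x) := by
  have h := chkRun_fst k f σ
  simp only [chk, chkRun, List.foldl_append, List.foldl_cons, List.foldl_nil]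
  rw [show (List.foldl (fun p x => (p.1 ++ [x], p.2 && memB k f p.1 x)) ([], true) σ)
      = chkRun k f σ from rfl, h]

lemma chk_prefix (k : ℕ) {n : ℕ} (f : List (Fin n) → Bool) :
    ∀ ρ τ : List (Fin n), chk k f (τ ++ ρ) = true → chk k f τ = true := by
  intro ρ
  induction ρ using List.reverseRecOn with
  | nil => intro τ h; simpa using h
  | append_singleton ρ x ih =>
      intro τ h
      rw [← List.append_assoc, chk_append] at h
      exact ih τ (Bool.and_elim_left h)

lemma length_filter_eq_card {n : ℕ} (p : Fin n → Bool) :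
    ((List.finRange n).filter p).length = (Finset.univ.filter (fun y => p y = true)).card := by
  rw [← List.toFinset_card_of_nodup ((List.nodup_finRange n).filter p),
    List.toFinset_filter, List.toFinset_finRange]

lemma ncard_memB_of_mem (k : ℕ) {n : ℕ} (hkn : k ≤ n) (f : List (Fin n) → Bool)
    (τ : List (Fin n)) (hτ : f τ = true)
    (hj : (Finset.univ.filter fun x : Fin n => f (τ ++ [x]) = true).card ≤ k) :
    {x : Fin n | memB k f τ x = true}.ncard = k := by
  classical
  set S : Finset (Fin n) := Finset.univ.filter fun x : Fin n => f (τ ++ [x]) = true with hS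
  set N : Finset (Fin n) := Finset.univ.filter fun x : Fin n => f (τ ++ [x]) = false with hN
  set j : ℕ := S.card with hj'
  have hcards : j + N.card = n := by
    have h := Finset.card_filter_add_card_filter_not
      (s := (Finset.univ : Finset (Fin n))) (p := fun x => f (τ ++ [x]) = true)
    simp only [Bool.not_eq_true, Finset.card_univ, Fintype.card_fin] at h
    exact h
  have hrank : ∀ x : Fin n,
      ((List.finRange n).filter fun (y : Fin n) =>
        decide ((y : ℕ) < (x : ℕ)) && !f (τ ++ [y])).length = (N.filter (· < x)).card := by
    intro x
    rw [length_filter_eq_card]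
    congr 1
    ext y
    simp only [Finset.mem_filter, Finset.mem_univ, true_and, hN, Bool.and_eq_true,
      decide_eq_true_eq, Bool.not_eq_true', Fin.lt_def]
    tauto
  have hjlist : ((List.finRange n).filter fun (y : Fin n) => f (τ ++ [y])).length = j := by
    rw [length_filter_eq_card]
  have hset : {x : Fin n | memB k f τ x = true}
      = ↑(S ∪ N.filter fun x => (N.filter (· < x)).card < k - j) := by
    ext x
    simp only [Set.mem_setOf_eq, memB, if_pos hτ, Bool.or_eq_true, decide_eq_true_eq,
      Finset.mem_coe, Finset.mem_union, hrank, hjlist]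
    constructor
    · rintro (h | h)
      · exact Or.inl (Finset.mem_filter.2 ⟨Finset.mem_univ _, h⟩)
      · cases hfx : f (τ ++ [x]) with
        | true => exact Or.inl (Finset.mem_filter.2 ⟨Finset.mem_univ _, hfx⟩)
        | false =>
            refine Or.inr (Finset.mem_filter.2
              ⟨Finset.mem_filter.2 ⟨Finset.mem_univ _, hfx⟩, ?_⟩)
            omega
    · rintro (h | h)
      · exact Or.inl ((Finset.mem_filter.1 h).2)
      · exact Or.inr (by have := (Finset.mem_filter.1 h).2; omega)
  rw [hset, Set.ncard_coe_finset]
  have hdisj : Disjoint S (N.filter fun x => (N.filter (· < x)).card < k - j) := by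
    rw [Finset.disjoint_left]
    intro x hxS hxF
    have h1 : f (τ ++ [x]) = true := (Finset.mem_filter.1 hxS).2
    have h2 : f (τ ++ [x]) = false :=
      (Finset.mem_filter.1 ((Finset.mem_filter.1 hxF).1)).2
    simp [h1] at h2
  rw [Finset.card_union_of_disjoint hdisj, card_rank_filter' N (k - j) (by omega)]
  omega

lemma ncard_memB_of_not_mem (k : ℕ) {n : ℕ} (hkn : k ≤ n) (f : List (Fin n) → Bool)
    (τ : List (Fin n)) (hτ : f τ = false) :
    {x : Fin n | memB k f τ x = true}.ncard = k := by
  classical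
  have hset : {x : Fin n | memB k f τ x = true}
      = ↑(Finset.univ.filter fun x : Fin n => (x : ℕ) < k) := by
    ext x
    simp [memB, hτ]
  rw [hset, Set.ncard_coe_finset]
  have : (Finset.univ.filter fun x : Fin n => (x : ℕ) < k)
      = Finset.map (Fin.castLEEmb hkn) Finset.univ := by
    ext x
    simp only [Finset.mem_filter, Finset.mem_univ, true_and, Finset.mem_map]
    constructor
    · intro hx
      exact ⟨⟨(x : ℕ), hx⟩, by ext; simp⟩
    · rintro ⟨y, rfl⟩
      simpa using y.isLt
  rw [this, Finset.card_map, Finset.card_univ, Fintype.card_fin]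

section Computability

variable {n : ℕ} [Inhabited (Fin n)] {f : List (Fin n) → Bool} (k : ℕ)

lemma length_filter_foldl {β : Type*} (l : List β) (q : β → Bool) :
    (l.filter q).length = l.foldl (fun c y => c + cond (q y) 1 0) 0 := by
  suffices h : ∀ c : ℕ, l.foldl (fun c y => c + cond (q y) 1 0) c = c + (l.filter q).length by
    simpa using (h 0).symm
  induction l with
  | nil => simp
  | cons a l ih =>
      intro c
      cases hq : q a <;> simp [List.filter_cons, hq, ih] <;> omega

lemma computable_count {γ : Type*} [Primcodable γ]
    {q : γ → Fin n → Bool} (hq : Computable₂ q) :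
    Computable fun a : γ => ((List.finRange n).filter (q a)).length := by
  have h : Computable fun a : γ =>
      (List.finRange n).foldl (fun c y => c + cond (q a y) 1 0) 0 := by
    have hh : Computable₂ fun (a : γ) (p : ℕ × Fin n) => p.1 + cond (q a p.2) 1 0 :=
      Primrec₂.to_comp Primrec.nat_add |>.comp
        (Computable.fst.comp Computable.snd)
        (Computable.cond (hq.comp Computable.fst (Computable.snd.comp Computable.snd))
          (Computable.const 1) (Computable.const 0))
    exact (computable_list_foldl' (Computable.const (List.finRange n))
      (Computable.const 0) hh)
  exact h.of_eq fun a => (length_filter_foldl _ _).symm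

lemma memB_computable (hf : Computable f) :
    Computable₂ fun (τ : List (Fin n)) (x : Fin n) => memB k f τ x := by
  have hconcat : Computable fun p : List (Fin n) × Fin n => p.1 ++ [p.2] :=
    Computable.list_concat.comp Computable.fst Computable.snd
  have hq1 : Computable₂ fun (p : List (Fin n) × Fin n) (y : Fin n) =>
      decide ((y : ℕ) < ((p.2 : Fin n) : ℕ)) && !f (p.1 ++ [y]) := by
    have hlt : Computable fun q : (List (Fin n) × Fin n) × Fin n =>
        decide ((q.2 : ℕ) < ((q.1.2 : Fin n) : ℕ)) :=
      (Primrec.nat_lt.comp (Primrec.fin_val.comp Primrec.snd)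
        (Primrec.fin_val.comp (Primrec.snd.comp Primrec.fst))).decide.to_comp
    have hnot : Computable fun q : (List (Fin n) × Fin n) × Fin n =>
        !f (q.1.1 ++ [q.2]) :=
      (Primrec.dom_bool Bool.not).to_comp.comp
        (hf.comp (Computable.list_concat.comp (Computable.fst.comp Computable.fst)
          Computable.snd))
    exact (Primrec₂.to_comp (Primrec.dom_bool₂ (· && ·))).comp hlt hnot
  have hc1 : Computable fun p : List (Fin n) × Fin n =>
      ((List.finRange n).filter fun (y : Fin n) =>
        decide ((y : ℕ) < ((p.2 : Fin n) : ℕ)) && !f (p.1 ++ [y])).length :=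
    computable_count hq1
  have hq2 : Computable₂ fun (p : List (Fin n) × Fin n) (y : Fin n) => f (p.1 ++ [y]) :=
    hf.comp (Computable.list_concat.comp (Computable.fst.comp Computable.fst)
      Computable.snd)
  have hc2 : Computable fun p : List (Fin n) × Fin n =>
      ((List.finRange n).filter fun (y : Fin n) => f (p.1 ++ [y])).length :=
    computable_count hq2
  have hsum : Computable fun p : List (Fin n) × Fin n =>
      decide ((((List.finRange n).filter fun (y : Fin n) =>
          decide ((y : ℕ) < ((p.2 : Fin n) : ℕ)) && !f (p.1 ++ [y])).length
        + ((List.finRange n).filter fun (y : Fin n) => f (p.1 ++ [y])).length) < k) := by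
    have hadd : Computable fun p : List (Fin n) × Fin n =>
        (((List.finRange n).filter fun (y : Fin n) =>
          decide ((y : ℕ) < ((p.2 : Fin n) : ℕ)) && !f (p.1 ++ [y])).length
        + ((List.finRange n).filter fun (y : Fin n) => f (p.1 ++ [y])).length) :=
      Primrec₂.to_comp Primrec.nat_add |>.comp hc1 hc2
    exact (Primrec.nat_lt.decide.to_comp).comp hadd (Computable.const k)
  have hor : Computable fun p : List (Fin n) × Fin n =>
      (f (p.1 ++ [p.2]) ||
        decide ((((List.finRange n).filter fun (y : Fin n) =>
            decide ((y : ℕ) < ((p.2 : Fin n) : ℕ)) && !f (p.1 ++ [y])).length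
          + ((List.finRange n).filter fun (y : Fin n) => f (p.1 ++ [y])).length) < k)) :=
    (Primrec₂.to_comp (Primrec.dom_bool₂ (· || ·))).comp (hf.comp hconcat) hsum
  have hvalk : Computable fun p : List (Fin n) × Fin n => decide (((p.2 : Fin n) : ℕ) < k) :=
    (Primrec.nat_lt.comp (Primrec.fin_val.comp Primrec.snd) (Primrec.const k)).decide.to_comp
  have := Computable.cond (hf.comp Computable.fst) hor hvalk
  exact this.of_eq fun p => by cases hfp : f p.1 <;> simp [memB, hfp]

lemma chk_computable (hf : Computable f) : Computable (chk k f) := by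
  have hh : Computable₂ fun (_ : List (Fin n)) (p : (List (Fin n) × Bool) × Fin n) =>
      (p.1.1 ++ [p.2], p.1.2 && memB k f p.1.1 p.2) := by
    refine Computable.pair ?_ ?_
    · exact Computable.list_concat.comp (Computable.fst.comp (Computable.fst.comp Computable.snd))
        (Computable.snd.comp Computable.snd)
    · exact (Primrec₂.to_comp (Primrec.dom_bool₂ (· && ·))).comp
        (Computable.snd.comp (Computable.fst.comp Computable.snd))
        ((memB_computable k hf).comp
          (Computable.fst.comp (Computable.fst.comp Computable.snd))
          (Computable.snd.comp Computable.snd))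
  have hrun : Computable fun σ : List (Fin n) => chkRun k f σ :=
    (computable_list_foldl' Computable.id (Computable.const (([] : List (Fin n)), true)) hh)
  exact Computable.snd.comp hrun

end Computability

/-- for `2 ≤ k ≤ n`, every nonempty computable `k`-tree in `n^{<ω}` is
contained in a computable `k`-branching subtree of `n^{<ω}`; consequently paths
through computable `k`-trees and through computable `k`-branching trees coincide. -/
theorem kTree_extends_to_kBranching_finite_alphabet (k n : ℕ) (h2 : 2 ≤ k) (hkn : k ≤ n) :
    (∀ T : Set (List (Fin n)), T.Nonempty → IsKTree k T → ComputableTree T →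
      ∃ T' : Set (List (Fin n)),
        IsBranchingTree k T' ∧ ComputableTree T' ∧ T ⊆ T') ∧
    (∀ f : ℕ → Fin n,
      (∃ T : Set (List (Fin n)), IsKTree k T ∧ ComputableTree T ∧ IsPathThrough f T) ↔
      (∃ T : Set (List (Fin n)),
        IsBranchingTree k T ∧ ComputableTree T ∧ IsPathThrough f T)) := by
  haveI : Inhabited (Fin n) := ⟨⟨0, by omega⟩⟩
  have main : ∀ T : Set (List (Fin n)), T.Nonempty → IsKTree k T → ComputableTree T →
      ∃ T' : Set (List (Fin n)),
        IsBranchingTree k T' ∧ ComputableTree T' ∧ T ⊆ T' := by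
    intro T hne hKT hCT
    obtain ⟨f, hfc, hp⟩ := ComputablePred.computable_iff.1 hCT
    have hmem : ∀ σ, σ ∈ T ↔ f σ = true := fun σ => iff_of_eq (congrFun hp σ)
    refine ⟨{σ | chk k f σ = true}, ⟨?_, ?_⟩, ?_, ?_⟩
    · -- subtree
      intro σ hσ τ hpre
      obtain ⟨ρ, rfl⟩ := hpre
      exact chk_prefix k f ρ τ hσ
    · -- branching
      intro σ hσ
      right
      have hσ' : chk k f σ = true := hσ
      have hsucc : succSet {σ | chk k f σ = true} σ = {x : Fin n | memB k f σ x = true} := by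
        ext x
        simp only [succSet, Set.mem_setOf_eq, chk_append, hσ', Bool.true_and]
      rw [hsucc]
      cases hfσ : f σ with
      | false => exact ncard_memB_of_not_mem k hkn f σ hfσ
      | true =>
          refine ncard_memB_of_mem k hkn f σ hfσ ?_
          have hσT : σ ∈ T := (hmem σ).2 hfσ
          have h2' := (hKT.2 σ hσT).2
          have heq : succSet T σ
              = ↑(Finset.univ.filter fun x : Fin n => f (σ ++ [x]) = true) := by
            ext x
            simp only [succSet, Set.mem_setOf_eq, Finset.coe_filter, Finset.mem_univ, true_and]
            exact hmem _
          rwa [heq, Set.ncard_coe_finset] at h2'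
    · -- computable
      exact ComputablePred.computable_iff.2 ⟨chk k f, chk_computable k hfc, rfl⟩
    · -- contains T
      intro σ hσ
      induction σ using List.reverseRecOn with
      | nil => rfl
      | append_singleton σ x ih =>
          have hσ' : σ ∈ T := hKT.1 _ hσ σ (List.prefix_append σ [x])
          have hchk : chk k f σ = true := ih hσ'
          show chk k f (σ ++ [x]) = true
          rw [chk_append, hchk, Bool.true_and, memB, if_pos ((hmem σ).1 hσ'),
            (hmem _).1 hσ, Bool.true_or]
  refine ⟨main, ?_⟩
  intro g
  constructor
  · rintro ⟨T, hKT, hCT, hpath⟩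
    have hne : T.Nonempty := ⟨[], by simpa using hpath 0⟩
    obtain ⟨T', hBT, hCT', hsub⟩ := main T hne hKT hCT
    exact ⟨T', hBT, hCT', fun m => hsub (hpath m)⟩
  · rintro ⟨T, hBT, hCT, hpath⟩
    refine ⟨T, ⟨hBT.1, ?_⟩, hCT, hpath⟩
    intro σ hσ
    rcases hBT.2 σ hσ with h | h <;> constructor <;> omega
end

section
/- For every k ≥ 2, if f : ℕ → Fin (k+1) is k-surviving, then the function f viewed as a map ℕ → ℕ is k-globally branch surviving: f is not a path through any computable k-branching subtree of ω^{<ω}. -/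
namespace KGBS

open List

/-- Mapping a computable binary function over a computable list is computable. -/
theorem list_map_comp {α β σ : Type*} [Primcodable α] [Primcodable β] [Primcodable σ]
    {f : α → List β} {g : α → β → σ} (hf : Computable f) (hg : Computable₂ g) :
    Computable fun a => (f a).map (g a) := by
  have key : ∀ (l : List β) (gg : β → σ) (n : ℕ),
      (Nat.rec (motive := fun _ => List σ) []
        (fun m ih => ih ++ ((l[m]?).map gg).toList) n) = (l.take n).map gg := by
    intro l gg n
    induction n with
    | zero => simp
    | succ m ih =>
      show (Nat.rec (motive := fun _ => List σ) [] _ m) ++ ((l[m]?).map gg).toList = _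
      rw [ih, List.take_succ]
      cases h : l[m]? <;> simp [h]
  have hstep : Computable₂ fun (a : α) (p : ℕ × List σ) =>
      p.2 ++ (((f a)[p.1]?).map (g a)).toList :=
    (Computable.list_append.comp (Computable.snd.comp Computable.snd)
      (Primrec.optionToList.to_comp.comp
        (Computable.option_map
          (Computable.list_getElem?.comp (hf.comp Computable.fst)
            (Computable.fst.comp Computable.snd))
          ((hg.comp (Computable.fst.comp Computable.fst) Computable.snd).to₂)))).to₂
  have h1 : Computable fun a => Nat.rec (motive := fun _ => List σ) []
      (fun m ih => ih ++ (((f a)[m]?).map (g a)).toList) (f a).length :=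
    Computable.nat_rec (Computable.list_length.comp hf) (Computable.const []) hstep
  exact h1.of_eq fun a => by rw [key, List.take_length]

variable (k : ℕ) (g : List ℕ → Bool)

def allLE (σ : List ℕ) : Bool := σ.foldr (fun a b => decide (a ≤ k) && b) true

def memT (σ : List ℕ) : Bool := g σ && allLE k σ

def Sl (σ : List ℕ) : List ℕ :=
  ((List.range (k + 1)).map fun x => bif memT k g (σ ++ [x]) then [x] else []).flatten

def padF (s : List ℕ) : List ℕ :=
  s ++ (List.range (k + 1)).foldr (fun a r => if a ∈ s then r else a :: r) []

def Cl (σ : List ℕ) : List ℕ := (padF k (Sl k g σ)).take k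

def Fb (σ : List ℕ) : Bool :=
  ((List.range σ.length).map fun i =>
    decide (σ.getD i 0 ∈ Cl k g (σ.take i))).foldr (· && ·) true

theorem allLE_iff (σ : List ℕ) : allLE k σ = true ↔ ∀ x ∈ σ, x ≤ k := by
  induction σ with
  | nil => simp [allLE]
  | cons a l ih =>
    show (decide (a ≤ k) && allLE k l) = true ↔ _
    simp [ih]

theorem memT_iff (σ : List ℕ) : memT k g σ = true ↔ (g σ = true ∧ ∀ x ∈ σ, x ≤ k) := by
  simp [memT, allLE_iff]

theorem Sl_eq (σ : List ℕ) :
    Sl k g σ = (List.range (k + 1)).filter fun x => memT k g (σ ++ [x]) := by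
  unfold Sl
  generalize List.range (k + 1) = l
  induction l with
  | nil => rfl
  | cons a l ih => cases h : memT k g (σ ++ [a]) <;> simp [List.filter_cons, h, ih]

theorem mem_Sl (σ : List ℕ) (x : ℕ) :
    x ∈ Sl k g σ ↔ x < k + 1 ∧ memT k g (σ ++ [x]) = true := by
  rw [Sl_eq]; simp [List.mem_filter, List.mem_range, and_comm]

theorem Sl_nodup (σ : List ℕ) : (Sl k g σ).Nodup := by
  rw [Sl_eq]; exact List.nodup_range.filter _

theorem filter_length_split (p : ℕ → Bool) (l : List ℕ) :
    (l.filter p).length + (l.filter fun a => !(p a)).length = l.length := by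
  induction l with
  | nil => rfl
  | cons a l ih => cases h : p a <;> simp [List.filter_cons, h] <;> omega

theorem padF_eq (s : List ℕ) :
    padF k s = s ++ (List.range (k + 1)).filter fun a => decide (a ∉ s) := by
  unfold padF
  congr 1
  generalize List.range (k + 1) = l
  induction l with
  | nil => rfl
  | cons a l ih => by_cases h : a ∈ s <;> simp [List.filter_cons, h, ih]

theorem length_padF (s : List ℕ) (hnd : s.Nodup) (hb : ∀ x ∈ s, x < k + 1) :
    (padF k s).length = k + 1 := by
  have h1 : ((List.range (k + 1)).filter fun a => decide (a ∈ s)).length = s.length := by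
    have hnd2 : ((List.range (k + 1)).filter fun a => decide (a ∈ s)).Nodup :=
      List.nodup_range.filter _
    rw [← List.toFinset_card_of_nodup hnd2, ← List.toFinset_card_of_nodup hnd]
    congr 1
    ext x
    simp only [List.mem_toFinset, List.mem_filter, List.mem_range, decide_eq_true_eq]
    exact ⟨fun h => h.2, fun h => ⟨hb x h, h⟩⟩
  have h2 := filter_length_split (fun a => decide (a ∈ s)) (List.range (k + 1))
  have h3 : ((List.range (k + 1)).filter fun a => !(decide (a ∈ s))).length
      = ((List.range (k + 1)).filter fun a => decide (a ∉ s)).length := by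
    congr 1
    apply List.filter_congr
    intro x _
    simp
  rw [padF_eq, List.length_append, ← h3]
  rw [List.length_range] at h2
  omega

theorem padF_nodup (s : List ℕ) (hnd : s.Nodup) : (padF k s).Nodup := by
  rw [padF_eq]
  refine List.Nodup.append hnd (List.nodup_range.filter _) ?_
  intro x hx hx'
  have := (List.mem_filter.1 hx').2
  simp at this
  exact this hx

theorem mem_padF_lt (s : List ℕ) (hb : ∀ x ∈ s, x < k + 1) :
    ∀ x ∈ padF k s, x < k + 1 := by
  rw [padF_eq]
  intro x hx
  rcases List.mem_append.1 hx with h | h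
  · exact hb x h
  · exact List.mem_range.1 (List.mem_filter.1 h).1

theorem Cl_length (σ : List ℕ) : (Cl k g σ).length = k := by
  unfold Cl
  rw [List.length_take, length_padF k _ (Sl_nodup k g σ)
    (fun x hx => ((mem_Sl k g σ x).1 hx).1)]
  omega

theorem Cl_nodup (σ : List ℕ) : (Cl k g σ).Nodup :=
  (List.take_sublist _ _).nodup (padF_nodup k _ (Sl_nodup k g σ))

theorem mem_Cl_lt (σ : List ℕ) : ∀ x ∈ Cl k g σ, x < k + 1 := fun x hx =>
  mem_padF_lt k _ (fun y hy => ((mem_Sl k g σ y).1 hy).1) x (List.take_subset _ _ hx)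

theorem Sl_subset_Cl (σ : List ℕ) (hlen : (Sl k g σ).length ≤ k) :
    ∀ x ∈ Sl k g σ, x ∈ Cl k g σ := by
  intro x hx
  have h1 : (padF k (Sl k g σ)).take (Sl k g σ).length = Sl k g σ := by
    unfold padF; exact List.take_left
  have h2 : (Cl k g σ).take (Sl k g σ).length = Sl k g σ := by
    unfold Cl; rw [List.take_take, min_eq_left hlen]; exact h1
  rw [← h2] at hx
  exact List.take_subset _ _ hx

theorem allB_iff (l : List Bool) : (l.foldr (· && ·) true = true) ↔ ∀ b ∈ l, b = true := by
  induction l with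
  | nil => simp
  | cons a l ih => simp [List.foldr_cons, ih]

theorem Fb_iff (σ : List ℕ) :
    Fb k g σ = true ↔ ∀ i < σ.length, σ.getD i 0 ∈ Cl k g (σ.take i) := by
  unfold Fb
  rw [allB_iff]
  simp

theorem Fb_nil : Fb k g [] = true := by simp [Fb]

theorem getD_concat_length (σ : List ℕ) (x : ℕ) : (σ ++ [x]).getD σ.length 0 = x := by
  simp [List.getD_eq_getElem?_getD, List.getElem?_concat_length]

theorem Fb_concat (σ : List ℕ) (x : ℕ) :
    Fb k g (σ ++ [x]) = true ↔ (Fb k g σ = true ∧ x ∈ Cl k g σ) := by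
  rw [Fb_iff, Fb_iff]
  constructor
  · intro H
    constructor
    · intro i hi
      have h := H i (by simp; omega)
      rwa [List.getD_append _ _ _ _ hi, List.take_append_of_le_length (le_of_lt hi)] at h
    · have h := H σ.length (by simp)
      rwa [List.take_left, getD_concat_length] at h
  · rintro ⟨H, hx⟩ i hi
    simp only [List.length_append, List.length_singleton] at hi
    rcases lt_or_eq_of_le (Nat.lt_succ_iff.1 hi) with h | h
    · rw [List.getD_append _ _ _ _ h, List.take_append_of_le_length (le_of_lt h)]
      exact H i h
    · subst h
      rw [List.take_left, getD_concat_length]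
      exact hx

theorem Fb_drop (ρ : List ℕ) : ∀ τ : List ℕ, Fb k g (τ ++ ρ) = true → Fb k g τ = true := by
  induction ρ using List.reverseRecOn with
  | nil => intro τ h; simpa using h
  | append_singleton ρ x ih =>
    intro τ h
    rw [← List.append_assoc] at h
    exact ih τ ((Fb_concat k g (τ ++ ρ) x).1 h).1

/-! Computability. -/

theorem memB : Primrec₂ fun (a : ℕ) (l : List ℕ) => decide (a ∈ l) := by
  have h : Primrec fun p : ℕ × List ℕ => decide (p.2.idxOf p.1 < p.2.length) :=
    (Primrec.nat_lt.comp (Primrec.list_idxOf.comp Primrec.fst Primrec.snd)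
      (Primrec.list_length.comp Primrec.snd)).decide
  exact h.of_eq fun p => by simp [List.idxOf_lt_length_iff]

theorem take_eq (l : List ℕ) (n : ℕ) :
    l.take n = (List.range (min n l.length)).map fun i => l.getD i 0 := by
  apply List.ext_getElem
  · simp
  · intro i h1 h2
    simp only [List.length_take] at h1
    have hl : i < l.length := lt_of_lt_of_le h1 (min_le_right _ _)
    simp [List.getElem_take, List.getD_eq_getElem?_getD, List.getElem?_eq_getElem hl]

theorem takeN_primrec : Primrec₂ fun (l : List ℕ) (n : ℕ) => l.take n := by
  have h : Primrec fun p : List ℕ × ℕ =>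
      (List.range (min p.2 p.1.length)).map fun i => p.1.getD i 0 :=
    Primrec.list_map
      (Primrec.list_range.comp (Primrec.nat_min.comp Primrec.snd
        (Primrec.list_length.comp Primrec.fst)))
      (((Primrec.list_getD 0).comp (Primrec.fst.comp Primrec.fst) Primrec.snd).to₂)
  exact h.of_eq fun p => (take_eq p.1 p.2).symm

theorem Fb_computable (hg : Computable g) : Computable (Fb k g) := by
  have hallLE : Computable (allLE k) := by
    have h : Primrec fun l : List ℕ => l.foldr (fun a b => decide (a ≤ k) && b) true :=
      Primrec.list_foldr Primrec.id (Primrec.const true)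
        (((Primrec.dom_bool₂ (· && ·)).comp
          (Primrec.nat_le.comp (Primrec.fst.comp Primrec.snd) (Primrec.const k)).decide
          (Primrec.snd.comp Primrec.snd)).to₂)
    exact h.to_comp
  have hmemT : Computable (memT k g) := by
    have h := Computable.cond hg hallLE (Computable.const false)
    exact h.of_eq fun σ => by cases hb : g σ <;> simp [memT, hb]
  have hSl : Computable (Sl k g) := by
    have hinner : Computable₂ fun (σ : List ℕ) (x : ℕ) =>
        bif memT k g (σ ++ [x]) then [x] else [] :=
      (Computable.cond (hmemT.comp (Computable.list_concat.comp Computable.fst Computable.snd))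
        (Computable.list_cons.comp Computable.snd (Computable.const []))
        (Computable.const [])).to₂
    exact Primrec.list_flatten.to_comp.comp
      (list_map_comp (Computable.const (List.range (k + 1))) hinner)
  have hpad : Primrec (padF k) := by
    have hc : PrimrecPred fun p : List ℕ × (ℕ × List ℕ) => p.2.1 ∈ p.1 := by
      have := memB.comp (Primrec.fst.comp Primrec.snd) (Primrec.fst (α := List ℕ) (β := ℕ × List ℕ))
      exact Primrec.primrecPred (p := fun p : List ℕ × (ℕ × List ℕ) => p.2.1 ∈ p.1) this
    have hfold : Primrec fun s : List ℕ =>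
        (List.range (k + 1)).foldr (fun a r => if a ∈ s then r else a :: r) [] :=
      Primrec.list_foldr (Primrec.const (List.range (k + 1))) (Primrec.const [])
        ((Primrec.ite hc (Primrec.snd.comp Primrec.snd)
          (Primrec.list_cons.comp (Primrec.fst.comp Primrec.snd)
            (Primrec.snd.comp Primrec.snd))).to₂)
    exact Primrec.list_append.comp Primrec.id hfold
  have hCl : Computable (Cl k g) := by
    have htk : Primrec fun s : List ℕ => (padF k s).take k :=
      takeN_primrec.comp hpad (Primrec.const k)
    exact htk.to_comp.comp hSl
  have hhit : Computable₂ fun (σ : List ℕ) (i : ℕ) =>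
      decide (σ.getD i 0 ∈ Cl k g (σ.take i)) := by
    have h1 : Computable fun p : List ℕ × ℕ => p.1.getD p.2 0 :=
      ((Primrec.list_getD 0).comp Primrec.fst Primrec.snd).to_comp
    have h2 : Computable fun p : List ℕ × ℕ => Cl k g (p.1.take p.2) :=
      hCl.comp (takeN_primrec.comp Primrec.fst Primrec.snd).to_comp
    exact (memB.to_comp.comp h1 h2).to₂
  have hmap : Computable fun σ : List ℕ =>
      (List.range σ.length).map fun i => decide (σ.getD i 0 ∈ Cl k g (σ.take i)) :=
    list_map_comp (Primrec.list_range.to_comp.comp Primrec.list_length.to_comp) hhit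
  have hall : Primrec fun l : List Bool => l.foldr (· && ·) true :=
    Primrec.list_foldr Primrec.id (Primrec.const true)
      (((Primrec.dom_bool₂ (· && ·)).comp (Primrec.fst.comp Primrec.snd)
        (Primrec.snd.comp Primrec.snd)).to₂)
  exact (hall.to_comp.comp hmap).of_eq fun σ => rfl

end KGBS


/-- for `k ≥ 2`, a `k`-surviving `f : ℕ → Fin (k+1)`, viewed as a map
`ℕ → ℕ`, is `k`-globally branch surviving. -/
theorem kSurviving_implies_kGlobally_branch_surviving (k : ℕ) (hk : 2 ≤ k)
    (f : ℕ → Fin (k + 1)) (hf : KSurviving k f) :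
    ∀ T : Set (List ℕ), IsBranchingTree k T → ComputableTree T →
      ¬ IsPathThrough (fun n => (f n : ℕ)) T := by
  intro T hT hTc hpath
  obtain ⟨hsubT, hbrT⟩ := hT
  obtain ⟨inst, hgc⟩ := hTc
  set g : List ℕ → Bool := fun σ => @decide (σ ∈ T) (inst σ) with hgdef
  have hgT : ∀ σ, g σ = true ↔ σ ∈ T := fun σ => by simp [hgdef]
  -- every node of the pulled-back tree has at most `k` candidate successors
  have hSlen : ∀ σ : List ℕ, (KGBS.Sl k g σ).length ≤ k := by
    intro σ
    by_cases hσ : KGBS.memT k g σ = true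
    · have hσT : σ ∈ T := (hgT σ).1 ((KGBS.memT_iff k g σ).1 hσ).1
      have hc := hbrT σ hσT
      have hfin : (succSet T σ).Finite := by
        apply Set.finite_of_ncard_ne_zero
        rcases hc with h | h <;> omega
      have hsub2 : ∀ x ∈ KGBS.Sl k g σ, x ∈ hfin.toFinset := by
        intro x hx
        rw [Set.Finite.mem_toFinset]
        have hm := ((KGBS.mem_Sl k g σ x).1 hx).2
        exact (hgT _).1 ((KGBS.memT_iff k g _).1 hm).1
      calc (KGBS.Sl k g σ).length = (KGBS.Sl k g σ).toFinset.card :=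
            (List.toFinset_card_of_nodup (KGBS.Sl_nodup k g σ)).symm
        _ ≤ hfin.toFinset.card :=
            Finset.card_le_card (fun x hx => hsub2 x (List.mem_toFinset.1 hx))
        _ = (succSet T σ).ncard := (Set.ncard_eq_toFinset_card _ hfin).symm
        _ ≤ k := by rcases hc with h | h <;> omega
    · have hnil : KGBS.Sl k g σ = [] := by
        rw [KGBS.Sl_eq]
        rw [List.filter_eq_nil_iff]
        intro x _
        intro hmem
        obtain ⟨hgx, hallx⟩ := (KGBS.memT_iff k g _).1 hmem
        apply hσ
        rw [KGBS.memT_iff]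
        exact ⟨(hgT σ).2 (hsubT _ ((hgT _).1 hgx) σ ⟨[x], rfl⟩),
          fun y hy => hallx y (List.mem_append_left _ hy)⟩
      rw [hnil]
      simp
  set T2 : Set (List (Fin (k + 1))) :=
    {σ | KGBS.Fb k g (σ.map Fin.val) = true} with hT2def
  have hT2mem : ∀ σ : List (Fin (k + 1)),
      σ ∈ T2 ↔ KGBS.Fb k g (σ.map Fin.val) = true := fun _ => Iff.rfl
  -- T2 is a subtree
  have hT2sub : IsSubtree T2 := by
    intro σ hσ τ hpre
    rw [hT2mem] at hσ ⊢
    obtain ⟨ρ, hρ⟩ := hpre.map Fin.val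
    exact KGBS.Fb_drop k g ρ _ (by rw [hρ]; exact hσ)
  -- T2 is k-branching (every node has exactly k successors)
  have hT2br : ∀ σ ∈ T2, (succSet T2 σ).ncard = 1 ∨ (succSet T2 σ).ncard = k := by
    intro σ hσ
    right
    have hσF : KGBS.Fb k g (σ.map Fin.val) = true := hσ
    have hbound : ∀ m ∈ (KGBS.Cl k g (σ.map Fin.val)).toFinset, m < k + 1 :=
      fun m hm => KGBS.mem_Cl_lt k g _ m (List.mem_toFinset.1 hm)
    have hset : succSet T2 σ =
        ↑((KGBS.Cl k g (σ.map Fin.val)).toFinset.attachFin hbound) := by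
      ext y
      have : (σ ++ [y] ∈ T2) ↔
          (y : ℕ) ∈ KGBS.Cl k g (σ.map Fin.val) := by
        rw [hT2mem, List.map_append]
        simp only [List.map_cons, List.map_nil]
        rw [KGBS.Fb_concat]
        simp [hσF]
      simpa [succSet, Finset.mem_attachFin, List.mem_toFinset] using this
    rw [hset, Set.ncard_coe_finset, Finset.card_attachFin,
      List.toFinset_card_of_nodup (KGBS.Cl_nodup k g _), KGBS.Cl_length]
  -- T2 is computable
  have hT2comp : ComputableTree T2 := by
    refine ⟨fun σ => instDecidableEqBool _ _, ?_⟩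
    have hmapv : Computable fun σ : List (Fin (k + 1)) => σ.map Fin.val :=
      (Primrec.list_map Primrec.id ((Primrec.fin_val.comp Primrec.snd).to₂)).to_comp
    have hFbc := KGBS.Fb_computable k g hgc
    exact (hFbc.comp hmapv).of_eq fun σ => by
      cases h : KGBS.Fb k g (σ.map Fin.val) <;> simp [hT2mem, h]
  -- f is a path through T2
  have key : ∀ n, KGBS.Fb k g ((List.range n).map (fun i => (f i).val)) = true := by
    intro n
    induction n with
    | zero => simpa using KGBS.Fb_nil k g
    | succ n ih =>
      rw [List.range_succ, List.map_append]
      simp only [List.map_cons, List.map_nil]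
      rw [KGBS.Fb_concat]
      refine ⟨ih, ?_⟩
      apply KGBS.Sl_subset_Cl k g _ (hSlen _)
      rw [KGBS.mem_Sl]
      refine ⟨(f n).isLt, ?_⟩
      rw [KGBS.memT_iff]
      constructor
      · apply (hgT _).2
        have h := hpath (n + 1)
        rwa [List.range_succ, List.map_append] at h
      · intro x hx
        simp at hx
        rcases hx with ⟨i, _, rfl⟩ | rfl <;> exact Fin.is_le _
  have hpath2 : IsPathThrough f T2 := by
    intro n
    rw [hT2mem, List.map_map]
    exact key n
  exact hf T2 ⟨hT2sub, hT2br⟩ hT2comp hpath2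
end

section
/- There exist a computable 3-tree T contained in ω^{<ω} and a function A : ℕ → ℕ which is a path through T such that, for every k ≥ 2, A is not a path through any computable k-branching subtree of ω^{<ω}. In particular, there is a globally branch surviving function that is not 3-globally tree surviving. -/
namespace GBS

open Nat.Partrec (Code)
open Nat.Partrec.Code

/-! ### The halting approximation and the sets `S i` -/

/-- Stage-`s` halting approximation for the `i`-th code on input `0`. -/
def D (i s : ℕ) : Bool := (evaln s (Denumerable.ofNat Code i) 0).isSome

/-- The halting problem (on input `0`), pulled back to `ℕ`. -/
def HProp (i : ℕ) : Prop := ∃ s, D i s = true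

theorem D_mono {i s t : ℕ} (h : s ≤ t) (hs : D i s = true) : D i t = true := by
  rcases Option.isSome_iff_exists.1 hs with ⟨x, hx⟩
  exact Option.isSome_iff_exists.2 ⟨x, evaln_mono h hx⟩

theorem HProp_iff (i : ℕ) : HProp i ↔ ((Denumerable.ofNat Code i).eval 0).Dom := by
  constructor
  · rintro ⟨s, hs⟩
    rcases Option.isSome_iff_exists.1 hs with ⟨x, hx⟩
    exact Part.dom_iff_mem.2 ⟨x, evaln_complete.2 ⟨s, hx⟩⟩
  · intro h
    rcases Part.dom_iff_mem.1 h with ⟨x, hx⟩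
    rcases evaln_complete.1 hx with ⟨s, hs⟩
    exact ⟨s, Option.isSome_iff_exists.2 ⟨x, hs⟩⟩

/-- Membership in the `i`-th "secret" set `S i`: always contains `0` and `1`, and
additionally `s + 2` where `s` is the stage at which the `i`-th machine halts (if ever). -/
def elemB (i x : ℕ) : Bool :=
  decide (x < 2) || (D i (x - 2) && (decide (x = 2) || !D i (x - 3)))

theorem elemB_lt_two {i x : ℕ} (h : x < 2) : elemB i x = true := by
  simp [elemB, h]

theorem elemB_zero (i : ℕ) : elemB i 0 = true := elemB_lt_two (by norm_num)
theorem elemB_one (i : ℕ) : elemB i 1 = true := elemB_lt_two (by norm_num)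

theorem HProp_of_elemB {i x : ℕ} (h2 : 2 ≤ x) (h : elemB i x = true) : HProp i := by
  have : ¬ x < 2 := by omega
  simp [elemB, this] at h
  exact ⟨x - 2, h.1⟩

theorem Sset_eq_of_not {i : ℕ} (h : ¬ HProp i) :
    {x | elemB i x = true} = ({0, 1} : Set ℕ) := by
  ext x
  simp only [Set.mem_setOf_eq, Set.mem_insert_iff, Set.mem_singleton_iff]
  constructor
  · intro hx
    by_contra hc
    push_neg at hc
    exact h (HProp_of_elemB (by omega) hx)
  · rintro (rfl | rfl) <;> simp [elemB_zero, elemB_one]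

theorem Sset_eq_of_halt {i : ℕ} (h : HProp i) :
    {x | elemB i x = true} = ({0, 1, Nat.find h + 2} : Set ℕ) := by
  have hspec : D i (Nat.find h) = true := Nat.find_spec h
  ext x
  simp only [Set.mem_setOf_eq, Set.mem_insert_iff, Set.mem_singleton_iff]
  constructor
  · intro hx
    rcases Nat.lt_or_ge x 2 with h2 | h2
    · interval_cases x <;> simp
    · right; right
      have : ¬ x < 2 := by omega
      simp [elemB, this] at hx
      obtain ⟨hD, hor⟩ := hx
      have hle : Nat.find h ≤ x - 2 := Nat.find_min' h hD
      rcases hor with h2' | hnD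
      · omega
      · have hlt : ¬ (Nat.find h ≤ x - 3) := by
          intro hle3
          exact absurd (D_mono hle3 hspec) (by simp [hnD])
        omega
  · rintro (rfl | rfl | rfl)
    · exact elemB_zero i
    · exact elemB_one i
    · show elemB i (Nat.find h + 2) = true
      have h1 : Nat.find h + 2 - 2 = Nat.find h := by omega
      rcases Nat.eq_zero_or_pos (Nat.find h) with h0 | hpos
      · simp only [elemB, h1, h0]
        simpa using h0 ▸ hspec
      · have h2 : Nat.find h + 2 ≠ 2 := by omega
        have hnD : D i (Nat.find h - 1) = false :=
          Bool.eq_false_iff.2 (Nat.find_min h (by omega))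
        simp [elemB, h1, hspec, h2, hnD,
          show Nat.find h + 2 - 3 = Nat.find h - 1 from by omega]

/-! ### The tree `Tset` -/

/-- `chk n σ` checks that `σ`, regarded as sitting at depth `n`, is a valid string:
its `j`-th entry belongs to `S (n + j)`. -/
def chk : ℕ → List ℕ → Bool
  | _, [] => true
  | n, x :: σ => elemB n x && chk (n + 1) σ

/-- Our computable 3-tree. -/
def Tset : Set (List ℕ) := {σ | chk 0 σ = true}

theorem chk_append (σ : List ℕ) : ∀ (n : ℕ) (τ : List ℕ),
    chk n (σ ++ τ) = (chk n σ && chk (n + σ.length) τ) := by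
  induction σ with
  | nil => intro n τ; simp [chk]
  | cons x σ ih =>
      intro n τ
      simp only [List.cons_append, chk, ih, List.length_cons, List.append_eq]
      rw [show n + (σ.length + 1) = n + 1 + σ.length from by omega, Bool.and_assoc]

theorem chk_concat (σ : List ℕ) (n x : ℕ) :
    chk n (σ ++ [x]) = (chk n σ && elemB (n + σ.length) x) := by
  rw [chk_append]
  simp [chk]

theorem Tset_subtree : IsSubtree Tset := by
  rintro σ hσ τ ⟨ρ, rfl⟩
  have := chk_append τ 0 ρ
  simp only [Tset, Set.mem_setOf_eq] at hσ ⊢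
  rw [this, Bool.and_eq_true] at hσ
  exact hσ.1

theorem concat_mem_Tset {σ : List ℕ} (hσ : σ ∈ Tset) {x : ℕ}
    (hx : elemB σ.length x = true) : σ ++ [x] ∈ Tset := by
  simp only [Tset, Set.mem_setOf_eq] at hσ ⊢
  rw [chk_concat]
  simp [hσ, hx]

theorem succSet_Tset {σ : List ℕ} (hσ : σ ∈ Tset) :
    succSet Tset σ = {x | elemB σ.length x = true} := by
  ext x
  simp only [succSet, Tset, Set.mem_setOf_eq] at hσ ⊢
  rw [chk_concat]
  simp [hσ]

theorem Sset_ncard (i : ℕ) :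
    {x | elemB i x = true}.ncard = 2 ∨ {x | elemB i x = true}.ncard = 3 := by
  by_cases h : HProp i
  · right
    rw [Sset_eq_of_halt h]
    rw [Set.ncard_insert_of_notMem (by simp), Set.ncard_pair (by omega)]
  · left
    rw [Sset_eq_of_not h]
    exact Set.ncard_pair (by omega)

theorem Tset_isKTree : IsKTree 3 Tset := by
  refine ⟨Tset_subtree, fun σ hσ => ?_⟩
  rw [succSet_Tset hσ]
  rcases Sset_ncard σ.length with h | h <;> rw [h] <;> omega

end GBS

namespace GBS

open Nat.Partrec (Code)
open Nat.Partrec.Code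
open Computable

/-! ### Computability of the tree -/

theorem primrec_D : Primrec₂ D := by
  have h1 : Primrec fun p : ℕ × ℕ => ((p.2, Denumerable.ofNat Code p.1), 0) :=
    (Primrec.snd.pair ((Primrec.ofNat Code).comp Primrec.fst)).pair (Primrec.const 0)
  exact Primrec.option_isSome.comp (primrec_evaln.comp h1)

theorem primrec_elemB : Primrec₂ elemB := by
  have ha : Primrec fun p : ℕ × ℕ => decide (p.2 < 2) :=
    (Primrec.nat_lt.comp Primrec.snd (Primrec.const 2)).decide
  have hb : Primrec fun p : ℕ × ℕ => D p.1 (p.2 - 2) :=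
    primrec_D.comp Primrec.fst (Primrec.nat_sub.comp Primrec.snd (Primrec.const 2))
  have hc : Primrec fun p : ℕ × ℕ => decide (p.2 = 2) :=
    (Primrec.eq.comp Primrec.snd (Primrec.const 2)).decide
  have hd : Primrec fun p : ℕ × ℕ => !D p.1 (p.2 - 3) :=
    (Primrec.dom_bool Bool.not).comp
      (primrec_D.comp Primrec.fst (Primrec.nat_sub.comp Primrec.snd (Primrec.const 3)))
  exact (Primrec.dom_bool₂ Bool.or).comp ha
    ((Primrec.dom_bool₂ Bool.and).comp hb ((Primrec.dom_bool₂ Bool.or).comp hc hd))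

/-- One step of the fold computing `chk`. -/
def chkStep (p : ℕ × Bool) (x : ℕ) : ℕ × Bool := (p.1 + 1, p.2 && elemB p.1 x)

theorem chk_foldl (σ : List ℕ) : ∀ n b,
    σ.foldl chkStep (n, b) = (n + σ.length, b && chk n σ) := by
  induction σ with
  | nil => intro n b; simp [chk]
  | cons x σ ih =>
      intro n b
      simp only [List.foldl_cons, chkStep, ih, List.length_cons, chk, Prod.mk.injEq]
      exact ⟨by omega, by rw [Bool.and_assoc]⟩

theorem primrec_chk0 : Primrec fun σ : List ℕ => chk 0 σ := by
  have hstep : Primrec₂ fun (_ : List ℕ) (q : (ℕ × Bool) × ℕ) => chkStep q.1 q.2 := by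
    have h1 : Primrec fun q : List ℕ × ((ℕ × Bool) × ℕ) => q.2.1.1 + 1 :=
      Primrec.succ.comp (Primrec.fst.comp (Primrec.fst.comp Primrec.snd))
    have h2 : Primrec fun q : List ℕ × ((ℕ × Bool) × ℕ) => q.2.1.2 && elemB q.2.1.1 q.2.2 :=
      (Primrec.dom_bool₂ Bool.and).comp
        (Primrec.snd.comp (Primrec.fst.comp Primrec.snd))
        (primrec_elemB.comp (Primrec.fst.comp (Primrec.fst.comp Primrec.snd))
          (Primrec.snd.comp Primrec.snd))
    exact h1.pair h2
  have h := Primrec.list_foldl (Primrec.id (α := List ℕ))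
    (Primrec.const ((0 : ℕ), true)) hstep
  have h2 : Primrec fun σ : List ℕ => (σ.foldl chkStep (0, true)).2 := Primrec.snd.comp h
  exact h2.of_eq fun σ => by rw [chk_foldl]; simp

theorem computableTree_Tset : ComputableTree Tset := by
  apply ComputablePred.computable_iff.2
  exact ⟨fun σ => chk 0 σ, primrec_chk0.to_comp, rfl⟩

/-! ### `rho` and counting functions -/

/-- `rho σ0 j` is `σ0` followed by `j` zeros. -/
def rho (σ0 : List ℕ) (j : ℕ) : List ℕ := Nat.rec σ0 (fun _ IH => IH ++ [0]) j

theorem rho_succ (σ0 : List ℕ) (j : ℕ) : rho σ0 (j + 1) = rho σ0 j ++ [0] := rfl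

theorem rho_length (σ0 : List ℕ) (j : ℕ) : (rho σ0 j).length = σ0.length + j := by
  induction j with
  | zero => rfl
  | succ j ih => rw [rho_succ, List.length_append, ih]; simp; omega

theorem rho_prefix (σ0 : List ℕ) (j : ℕ) : σ0 <+: rho σ0 j := by
  induction j with
  | zero => exact List.prefix_refl σ0
  | succ j ih => rw [rho_succ]; exact ih.trans (List.prefix_append _ _)

theorem rho_mem {σ0 : List ℕ} (h : σ0 ∈ Tset) (j : ℕ) : rho σ0 j ∈ Tset := by
  induction j with
  | zero => exact h
  | succ j ih => rw [rho_succ]; exact concat_mem_Tset ih (elemB_zero _)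

theorem computable_rho (σ0 : List ℕ) : Computable (rho σ0) := by
  have h0 : Computable fun p : ℕ × (ℕ × List ℕ) => p.2.2 ++ [0] :=
    Computable.list_concat.comp (Computable.snd.comp Computable.snd) (Computable.const (0 : ℕ))
  have := Computable.nat_rec (Computable.id (α := ℕ)) (Computable.const σ0) h0.to₂
  exact this.of_eq fun j => rfl

/-- Count the number of `x < N` with `g j x = true`. -/
def cntF (g : ℕ → ℕ → Bool) (j N : ℕ) : ℕ :=
  Nat.rec 0 (fun x ih => ih + (bif g j x then 1 else 0)) N

theorem cntF_eq (g : ℕ → ℕ → Bool) (j : ℕ) : ∀ N,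
    cntF g j N = ((Finset.range N).filter (fun x => g j x = true)).card := by
  intro N
  induction N with
  | zero => rfl
  | succ N ih =>
      have hstep : cntF g j (N + 1) = cntF g j N + (bif g j N then 1 else 0) := rfl
      rw [hstep, ih, Finset.range_add_one, Finset.filter_insert]
      by_cases h : g j N = true
      · rw [if_pos h, Finset.card_insert_of_notMem (by simp), h]
        simp
      · rw [if_neg h, Bool.eq_false_iff.2 h]
        simp

theorem computable_cntF {g : ℕ → ℕ → Bool} (hg : Computable₂ g) : Computable₂ (cntF g) := by
  have hh : Computable fun q : (ℕ × ℕ) × (ℕ × ℕ) =>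
      q.2.2 + (bif g q.1.1 q.2.1 then 1 else 0) :=
    Primrec.nat_add.to_comp.comp (Computable.snd.comp Computable.snd)
      (Computable.cond (hg.comp (Computable.fst.comp Computable.fst)
        (Computable.fst.comp Computable.snd)) (Computable.const 1) (Computable.const 0))
  exact Computable.nat_rec Computable.snd (Computable.const 0) hh.to₂

theorem computable_nat_find {p : ℕ → ℕ → Bool} (hp : Computable₂ p)
    (hex : ∀ j, ∃ N, p j N = true) : Computable fun j => Nat.find (hex j) := by
  have h1 : Partrec fun j : ℕ => Nat.rfind (fun N => (Part.some (p j N) : Part Bool)) :=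
    Partrec.rfind hp.partrec₂
  exact h1.of_eq_tot fun j => Nat.mem_rfind.2
    ⟨Part.mem_some_iff.2 (Nat.find_spec (hex j)).symm,
     fun {m} hm => Part.mem_some_iff.2 (Bool.eq_false_iff.2 (Nat.find_min (hex j) hm)).symm⟩

end GBS

namespace GBS

open Nat.Partrec (Code)
open Nat.Partrec.Code
open Computable

/-! ### The escape lemma -/

theorem escape {k : ℕ} (hk : 2 ≤ k) {T' : Set (List ℕ)} (hb : IsBranchingTree k T')
    (hc : ComputablePred (· ∈ T')) {σ0 : List ℕ} (hσ0 : σ0 ∈ Tset) :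
    ∃ τ ∈ Tset, σ0 <+: τ ∧ τ ∉ T' := by
  classical
  by_contra hcontra
  push_neg at hcontra
  obtain ⟨f, hf, hpf⟩ := ComputablePred.computable_iff.1 hc
  have hmem : ∀ τ, τ ∈ T' ↔ f τ = true := fun τ => by
    have : (τ ∈ T') = (f τ = true) := congrFun hpf τ
    rw [this]
  set m := σ0.length with hm
  set g : ℕ → ℕ → Bool := fun j x => f (rho σ0 j ++ [x]) with hgdef
  have hrmem : ∀ j, rho σ0 j ∈ Tset := fun j => rho_mem hσ0 j
  have hrT' : ∀ j, rho σ0 j ∈ T' := fun j => hcontra _ (hrmem j) (rho_prefix σ0 j)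
  have hsub : ∀ j x, elemB (m + j) x = true → g j x = true := by
    intro j x hx
    have h1 : rho σ0 j ++ [x] ∈ Tset :=
      concat_mem_Tset (hrmem j) (by rw [rho_length]; exact hx)
    have h2 : σ0 <+: rho σ0 j ++ [x] := (rho_prefix σ0 j).trans (List.prefix_append _ _)
    exact (hmem _).1 (hcontra _ h1 h2)
  have hsucc : ∀ j, {x | g j x = true} = succSet T' (rho σ0 j) := by
    intro j; ext x; simp only [hgdef, Set.mem_setOf_eq, succSet, hmem]
  have hncard : ∀ j, {x | g j x = true}.ncard = k := by
    intro j
    rcases hb.2 _ (hrT' j) with h1 | h1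
    · exfalso
      rw [← hsucc j] at h1
      obtain ⟨a, ha⟩ := Set.ncard_eq_one.1 h1
      have h0 : (0 : ℕ) ∈ {x | g j x = true} := hsub j 0 (elemB_zero _)
      have h1' : (1 : ℕ) ∈ {x | g j x = true} := hsub j 1 (elemB_one _)
      rw [ha] at h0 h1'
      simp only [Set.mem_singleton_iff] at h0 h1'
      omega
    · rw [hsucc j]; exact h1
  have hfin : ∀ j, {x | g j x = true}.Finite := fun j =>
    Set.finite_of_ncard_ne_zero (by rw [hncard j]; omega)
  -- existence of a level where the count reaches `k`
  have hex : ∀ j, ∃ N, (cntF g j N == k) = true := by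
    intro j
    obtain ⟨N, hN⟩ := ((hfin j).toFinset).exists_nat_subset_range
    refine ⟨N, beq_iff_eq.2 ?_⟩
    rw [cntF_eq]
    have heq : (Finset.range N).filter (fun x => g j x = true) = (hfin j).toFinset := by
      ext x
      simp only [Finset.mem_filter, Finset.mem_range, Set.Finite.mem_toFinset, Set.mem_setOf_eq]
      refine ⟨fun h => h.2, fun h => ⟨?_, h⟩⟩
      exact Finset.mem_range.1 (hN (Set.Finite.mem_toFinset (hfin j) |>.2 h))
    rw [heq, ← Set.ncard_eq_toFinset_card _ (hfin j), hncard j]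
  set Nf : ℕ → ℕ := fun j => Nat.find (hex j) with hNf
  have hNk : ∀ j, cntF g j (Nf j) = k := fun j => beq_iff_eq.1 (Nat.find_spec (hex j))
  -- all elements of `F j` lie below `Nf j`
  have hbound : ∀ j x, g j x = true → x < Nf j := by
    intro j x hx
    have hsubF : (Finset.range (Nf j)).filter (fun x => g j x = true) ⊆ (hfin j).toFinset := by
      intro y hy
      simp only [Set.Finite.mem_toFinset, Set.mem_setOf_eq]
      exact (Finset.mem_filter.1 hy).2
    have hcard : ((hfin j).toFinset).card ≤
        ((Finset.range (Nf j)).filter (fun x => g j x = true)).card := by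
      rw [← cntF_eq, hNk, ← hncard j, Set.ncard_eq_toFinset_card _ (hfin j)]
    have heq := Finset.eq_of_subset_of_card_le hsubF hcard
    have hx' : x ∈ (Finset.range (Nf j)).filter (fun x => g j x = true) := by
      rw [heq]
      simp only [Set.Finite.mem_toFinset, Set.mem_setOf_eq]
      exact hx
    exact Finset.mem_range.1 (Finset.mem_filter.1 hx').1
  -- the auxiliary counting function used for the decision procedure
  set g2 : ℕ → ℕ → Bool := fun j x => decide (2 ≤ x) && elemB (m + j) x with hg2def
  set dec : ℕ → Bool := fun j => decide (0 < cntF g2 j (Nf j)) with hdecdef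
  have hdec_iff : ∀ j, dec j = true ↔ HProp (m + j) := by
    intro j
    rw [hdecdef]
    simp only [decide_eq_true_eq]
    rw [cntF_eq, Finset.card_pos]
    constructor
    · rintro ⟨x, hx⟩
      simp only [Finset.mem_filter, hg2def, Bool.and_eq_true, decide_eq_true_eq] at hx
      exact HProp_of_elemB hx.2.1 hx.2.2
    · intro hH
      refine ⟨Nat.find hH + 2, ?_⟩
      have hel : elemB (m + j) (Nat.find hH + 2) = true := by
        have := Sset_eq_of_halt hH
        have hmm : Nat.find hH + 2 ∈ {x | elemB (m + j) x = true} := by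
          rw [this]; simp
        exact hmm
      have hgx : g j (Nat.find hH + 2) = true := hsub j _ hel
      have hlt := hbound j _ hgx
      simp only [Finset.mem_filter, Finset.mem_range, hg2def, Bool.and_eq_true,
        decide_eq_true_eq]
      exact ⟨hlt, by omega, hel⟩
  -- computability of the decision procedure
  have hcomp_g : Computable₂ g := by
    have : Computable fun p : ℕ × ℕ => f (rho σ0 p.1 ++ [p.2]) :=
      hf.comp (Computable.list_concat.comp ((computable_rho σ0).comp Computable.fst)
        Computable.snd)
    exact this
  have hcomp_p : Computable₂ fun j N => (cntF g j N == k) := by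
    have heqb : Computable₂ fun a b : ℕ => (a == b) := by
      have : Primrec₂ fun a b : ℕ => (a == b) := by
        have := Primrec.eq (α := ℕ)
        exact this.decide.of_eq fun a b => Bool.eq_iff_iff.2 (by simp [beq_iff_eq])
      exact this.to_comp
    exact heqb.comp₂ (computable_cntF hcomp_g) ((Computable.const k).to₂)
  have hcomp_Nf : Computable Nf := computable_nat_find hcomp_p hex
  have hcomp_g2 : Computable₂ g2 := by
    have : Primrec₂ g2 := by
      have h1 : Primrec fun p : ℕ × ℕ => decide (2 ≤ p.2) :=
        (Primrec.nat_le.comp (Primrec.const 2) Primrec.snd).decide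
      have h2 : Primrec fun p : ℕ × ℕ => elemB (m + p.1) p.2 :=
        primrec_elemB.comp (Primrec.nat_add.comp (Primrec.const m) Primrec.fst) Primrec.snd
      exact (Primrec.dom_bool₂ Bool.and).comp h1 h2
    exact this.to_comp
  have hcomp_dec : Computable dec := by
    have h1 : Computable fun j => cntF g2 j (Nf j) :=
      (computable_cntF hcomp_g2).comp Computable.id hcomp_Nf
    have h2 : Computable₂ fun a b : ℕ => decide (a < b) := Primrec.nat_lt.decide.to_comp
    exact h2.comp (Computable.const 0) h1
  -- assemble a full decision procedure for `HProp`
  have hdecAll : ∃ F : ℕ → Bool, Computable F ∧ ∀ i, (F i = true ↔ HProp i) := by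
    set L : List Bool := (List.range m).map fun i' => decide (HProp i') with hL
    refine ⟨fun i => bif decide (i < m) then L.getD i false else dec (i - m), ?_, ?_⟩
    · apply Computable.cond
      · exact (Primrec.nat_lt.comp Primrec.id (Primrec.const m)).decide.to_comp
      · exact ((Primrec.list_getD false).comp (Primrec.const L) Primrec.id).to_comp
      · exact hcomp_dec.comp (Primrec.nat_sub.comp Primrec.id (Primrec.const m)).to_comp
    · intro i
      show (bif decide (i < m) then L.getD i false else dec (i - m)) = true ↔ HProp i
      by_cases h : i < m
      · have hd : decide (i < m) = true := decide_eq_true h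
        rw [hd, cond_true]
        have hgd : L.getD i false = decide (HProp i) := by
          rw [hL, List.getD_eq_getElem?_getD, List.getElem?_map, List.getElem?_range h]
          rfl
        rw [hgd, decide_eq_true_eq]
      · have hd : decide (i < m) = false := decide_eq_false h
        rw [hd, cond_false, hdec_iff, show m + (i - m) = i from by omega]
  obtain ⟨F, hF, hFiff⟩ := hdecAll
  have hhp : ComputablePred fun c : Code => (c.eval 0).Dom := by
    apply ComputablePred.computable_iff.2
    refine ⟨fun c => F (Encodable.encode c), hF.comp Computable.encode, ?_⟩
    funext c
    have h1 := hFiff (Encodable.encode c)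
    rw [HProp_iff, Denumerable.ofNat_encode] at h1
    exact propext h1.symm
  exact ComputablePred.halting_problem 0 hhp

end GBS

namespace GBS

open Nat.Partrec (Code)
open Nat.Partrec.Code

/-! ### Enumerating computable trees and diagonalizing -/

/-- The set of strings "accepted" by the code `c`. -/
def Pset (c : Code) : Set (List ℕ) := {σ | 1 ∈ c.eval (Encodable.encode σ)}

theorem exists_code_of_computablePred {T' : Set (List ℕ)} (h : ComputablePred (· ∈ T')) :
    ∃ c : Code, T' = Pset c := by
  obtain ⟨f, hf, hpf⟩ := ComputablePred.computable_iff.1 h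
  obtain ⟨c, hcode⟩ := exists_code.1 hf
  refine ⟨c, ?_⟩
  ext σ
  have heval : c.eval (Encodable.encode σ) = Part.some (Encodable.encode (f σ)) := by
    rw [hcode]
    simp [Encodable.encodek]
  have e1 : Encodable.encode true = 1 := by decide
  have e0 : Encodable.encode false = 0 := by decide
  have hmem : (σ ∈ T') = (f σ = true) := congrFun hpf σ
  simp only [Pset, Set.mem_setOf_eq, heval, Part.mem_some_iff]
  rw [hmem]
  cases hb : f σ <;> simp [e0, e1]

/-- One step of the construction of the diagonal path. -/
theorem step_exists (n : ℕ) (σ : List ℕ) (hσ : σ ∈ Tset) :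
    ∃ τ : List ℕ, τ ∈ Tset ∧ σ <+: τ ∧ σ.length < τ.length ∧
      (∀ k, 2 ≤ k → IsBranchingTree k (Pset (Denumerable.ofNat Code n)) →
        ComputablePred (· ∈ Pset (Denumerable.ofNat Code n)) →
        τ ∉ Pset (Denumerable.ofNat Code n)) := by
  set T' := Pset (Denumerable.ofNat Code n) with hT'
  have hσ0 : σ ++ [0] ∈ Tset := concat_mem_Tset hσ (elemB_zero _)
  by_cases hcase : ∃ k, 2 ≤ k ∧ IsBranchingTree k T' ∧ ComputablePred (· ∈ T')
  · obtain ⟨k, hk, hb, hc⟩ := hcase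
    obtain ⟨τ, hτT, hpre, hnot⟩ := escape hk hb hc hσ0
    refine ⟨τ, hτT, (List.prefix_append σ [0]).trans hpre, ?_, fun _ _ _ _ => hnot⟩
    have h1 := hpre.length_le
    simp only [List.length_append, List.length_singleton] at h1
    omega
  · push_neg at hcase
    refine ⟨σ ++ [0], hσ0, List.prefix_append σ [0], by simp, ?_⟩
    intro k hk hb hc
    exact absurd hc (hcase k hk hb)

/-- The diagonal sequence of nodes of `Tset`. -/
noncomputable def seq : ℕ → {σ : List ℕ // σ ∈ Tset}
  | 0 => ⟨[], by simp [Tset]; rfl⟩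
  | n + 1 =>
      ⟨Classical.choose (step_exists n (seq n).1 (seq n).2),
       (Classical.choose_spec (step_exists n (seq n).1 (seq n).2)).1⟩

theorem seq_succ_spec (n : ℕ) :
    (seq n).1 <+: (seq (n + 1)).1 ∧ (seq n).1.length < (seq (n + 1)).1.length ∧
      (∀ k, 2 ≤ k → IsBranchingTree k (Pset (Denumerable.ofNat Code n)) →
        ComputablePred (· ∈ Pset (Denumerable.ofNat Code n)) →
        (seq (n + 1)).1 ∉ Pset (Denumerable.ofNat Code n)) := by
  have h := Classical.choose_spec (step_exists n (seq n).1 (seq n).2)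
  exact ⟨h.2.1, h.2.2.1, h.2.2.2⟩

theorem seq_mono (a : ℕ) : ∀ b, a ≤ b → (seq a).1 <+: (seq b).1 := by
  intro b
  induction b with
  | zero => intro h; rw [Nat.le_zero.1 h]
  | succ b ih =>
      intro h
      rcases Nat.lt_or_ge a (b + 1) with h' | h'
      · exact (ih (by omega)).trans (seq_succ_spec b).1
      · rw [show a = b + 1 from by omega]

theorem seq_len (n : ℕ) : n ≤ (seq n).1.length := by
  induction n with
  | zero => omega
  | succ n ih => have := (seq_succ_spec n).2.1; omega

/-- The diagonal path. -/
noncomputable def Afun : ℕ → ℕ := fun i => (seq (i + 1)).1.getD i 0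

theorem range_map_A (n : ℕ) : (List.range n).map Afun = (seq n).1.take n := by
  induction n with
  | zero => simp
  | succ n ih =>
      rw [List.range_succ, List.map_append, ih]
      obtain ⟨t, ht⟩ := seq_mono n (n + 1) (by omega)
      have hlen : n + 1 ≤ (seq (n + 1)).1.length := seq_len (n + 1)
      have h1 : (seq (n + 1)).1.take n = (seq n).1.take n := by
        rw [← ht, List.take_append,
          Nat.sub_eq_zero_of_le (seq_len n), List.take_zero, List.append_nil]
      have h2 : (seq (n + 1)).1.take (n + 1)
          = (seq (n + 1)).1.take n ++ [(seq (n + 1)).1.getD n 0] := by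
        rw [List.take_succ, List.getElem?_eq_getElem (by omega),
          List.getD_eq_getElem _ _ (by omega)]
        rfl
      simp only [List.map_cons, List.map_nil]
      rw [h2, h1]
      rfl

theorem path_A : IsPathThrough Afun Tset := by
  intro n
  rw [range_map_A n]
  exact Tset_subtree _ (seq n).2 _ (List.take_prefix _ _)

theorem A_avoids {k : ℕ} (hk : 2 ≤ k) {T' : Set (List ℕ)} (hb : IsBranchingTree k T')
    (hc : ComputablePred (· ∈ T')) : ¬ IsPathThrough Afun T' := by
  intro hpath
  obtain ⟨c, rfl⟩ := exists_code_of_computablePred hc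
  set n := Encodable.encode c with hn
  have hofn : Denumerable.ofNat Code n = c := Denumerable.ofNat_encode c
  have hnot := (seq_succ_spec n).2.2 k hk (by rw [hofn]; exact hb) (by rw [hofn]; exact hc)
  rw [hofn] at hnot
  set L := (seq (n + 1)).1.length with hL
  have hlen : n + 1 ≤ L := seq_len (n + 1)
  have h1 : (List.range L).map Afun = (seq L).1.take L := range_map_A L
  have h2 : (seq L).1.take L = (seq (n + 1)).1 := by
    obtain ⟨t, ht⟩ := seq_mono (n + 1) L hlen
    rw [← ht, List.take_append, ← hL, Nat.sub_self, List.take_zero,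
      List.append_nil, List.take_length]
  have := hpath L
  rw [h1, h2] at this
  exact hnot this

end GBS

/-- there is a computable `3`-tree in `ω^{<ω}` with a path `A` which is
globally branch surviving (so `A` is not `3`-globally tree surviving). -/
theorem globally_branch_surviving_not_three_tree_surviving :
    ∃ (T : Set (List ℕ)) (A : ℕ → ℕ),
      IsKTree 3 T ∧ ComputableTree T ∧ IsPathThrough A T ∧
      ∀ k : ℕ, 2 ≤ k → ∀ T' : Set (List ℕ),
        IsBranchingTree k T' → ComputableTree T' → ¬ IsPathThrough A T' := by
  exact ⟨GBS.Tset, GBS.Afun, GBS.Tset_isKTree, GBS.computableTree_Tset, GBS.path_A,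
    fun k hk T' hb hc => GBS.A_avoids hk hb hc⟩
end
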